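/- Suppose a Tychonoff (completely regular Hausdorff) space X admits a family {Uᵢ : i ∈ I} of open subsets, points {aᵢ : i ∈ I} with aᵢ ∈ Uᵢ for all i, and a point z ∈ X such that (a) for each compact C ⊆ X the set {i ∈ I : C ∩ Uᵢ ≠ ∅} is finite, and (b) z is a cluster point of {aᵢ : i ∈ I}. Then X is not an Ascoli space: there exists a compact subset K of C_k(X, ℝ) (compact-open topology) that is not evenly continuous. -/

import Mathlib

open Topology Set

/-- If a Tychonoff space `X` admits open sets `Uᵢ`, points `aᵢ ∈ Uᵢ` and a point
`z` such that every compact set meets only finitely many `Uᵢ` and `z` is a cluster point of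
`{aᵢ}`, then `X` is not Ascoli: some compact subset of `C_k(X, ℝ)` is not evenly continuous. -/
theorem statement9 {X : Type*} [TopologicalSpace X] [CompletelyRegularSpace X] [T2Space X]
    {I : Type*} (U : I → Set X) (hU : ∀ i, IsOpen (U i))
    (a : I → X) (ha : ∀ i, a i ∈ U i)
    (hfin : ∀ C : Set X, IsCompact C → {i : I | (C ∩ U i).Nonempty}.Finite)
    (z : X) (hz : z ∈ closure (Set.range a \ {z})) :
    ∃ K : Set C(X, ℝ), IsCompact K ∧
      ¬ Continuous fun p : X × K => (p.2 : C(X, ℝ)) p.1 := by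
  classical
  -- choose Urysohn-type functions
  have hg : ∀ i, ∃ g : X → unitInterval, Continuous g ∧ g (a i) = 0 ∧ EqOn g 1 (U i)ᶜ := by
    intro i
    exact CompletelyRegularSpace.completely_regular (a i) (U i)ᶜ (hU i).isClosed_compl
      (by simpa using ha i)
  choose g hgc hga hgU using hg
  set f : I → C(X, ℝ) := fun i => ⟨fun x => 1 - (g i x : ℝ), by
    exact continuous_const.sub (continuous_subtype_val.comp (hgc i))⟩ with hf
  have hfa : ∀ i, f i (a i) = 1 := by
    intro i; simp [hf, hga i]
  have hfU : ∀ i, ∀ x ∉ U i, f i x = 0 := by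
    intro i x hx
    have : g i x = 1 := hgU i hx
    simp [hf, this]
  letI : TopologicalSpace I := ⊥
  haveI : DiscreteTopology I := ⟨rfl⟩
  -- f tends to 0 along cofinite, in compact-open topology
  have htend : Filter.Tendsto f Filter.cofinite (𝓝 (0 : C(X, ℝ))) := by
    rw [ContinuousMap.tendsto_iff_forall_isCompact_tendstoUniformlyOn]
    intro C hC
    intro ε hε
    filter_upwards [(hfin C hC).eventually_cofinite_notMem] with i hi x hx
    have hxU : x ∉ U i := fun hxu => hi ⟨x, hx, hxu⟩
    simpa [hfU i x hxU] using refl_mem_uniformity hε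
  set G := OnePoint.continuousMapMkDiscrete f 0 htend with hG
  have hG0 : G OnePoint.infty = 0 := rfl
  have hGi : ∀ i : I, G i = f i := fun i => rfl
  refine ⟨Set.range G, isCompact_range G.continuous, ?_⟩
  intro hcont
  have h0K : (0 : C(X, ℝ)) ∈ Set.range G := ⟨OnePoint.infty, rfl⟩
  -- continuity at (z, 0)
  have hca : ContinuousAt (fun p : X × (Set.range G) => (p.2 : C(X, ℝ)) p.1)
      (z, ⟨0, h0K⟩) := hcont.continuousAt
  have h0 : (fun p : X × (Set.range G) => (p.2 : C(X, ℝ)) p.1) (z, ⟨0, h0K⟩) = 0 := rfl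
  have hball : (fun p : X × (Set.range G) => (p.2 : C(X, ℝ)) p.1) ⁻¹' Metric.ball (0 : ℝ) 1 ∈
      𝓝 ((z, ⟨0, h0K⟩) : X × (Set.range G)) := by
    have : Metric.ball (0 : ℝ) 1 ∈ 𝓝 (0 : ℝ) := Metric.ball_mem_nhds _ one_pos
    exact hca.preimage_mem_nhds (by exact this)
  rw [nhds_prod_eq, Filter.mem_prod_iff] at hball
  obtain ⟨W, hW, V, hV, hWV⟩ := hball
  -- V is a nhd of ⟨0, h0K⟩ in the subtype; pull back
  rw [nhds_subtype_eq_comap, Filter.mem_comap] at hV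
  obtain ⟨V', hV', hV'sub⟩ := hV
  -- all but finitely many f i lie in V'
  have hFfin : {i : I | f i ∉ V'}.Finite := by
    have h := htend hV'
    rw [Filter.mem_map, Filter.mem_cofinite] at h
    exact h
  -- the finitely many bad points distinct from z
  set S : Set X := (a '' {i : I | f i ∉ V'}) \ {z} with hS
  have hSfin : S.Finite := ((hFfin.image a).diff)
  have hSclosed : IsClosed S := hSfin.isClosed
  have hzS : z ∉ S := fun h => h.2 rfl
  have hWz : W \ S ∈ 𝓝 z := by
    refine Filter.inter_mem hW ?_
    exact hSclosed.isOpen_compl.mem_nhds hzS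
  -- z is a cluster point: find a j with a j ∈ W \ S, a j ≠ z
  obtain ⟨x, hxW, hxA⟩ := mem_closure_iff_nhds.mp hz _ hWz
  obtain ⟨⟨j, rfl⟩, hxz⟩ := hxA
  have hjV' : f j ∈ V' := by
    by_contra hj
    exact hxW.2 ⟨⟨j, hj, rfl⟩, hxz⟩
  have hfjK : f j ∈ Set.range G := ⟨(j : OnePoint I), rfl⟩
  have hmem : ((a j, ⟨f j, hfjK⟩) : X × (Set.range G)) ∈ W ×ˢ V :=
    ⟨hxW.1, hV'sub hjV'⟩
  have := hWV hmem
  simp only [Set.mem_preimage, Metric.mem_ball, Real.dist_eq, sub_zero, hfa j] at this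
  norm_num at this
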